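/- For every p ∈ (1,∞) there exists δ = δ(p) > 0 such that for all weights w, σ on ℝ with [w,σ]_{A_p,D} < ∞ and with strong dyadic smoothness constants S^{sd}_w ≤ 1+δ and S^{sd}_σ ≤ 1+δ, one has [w,σ]_{A_p} ≤ (5/4)·[w,σ]_{A_p,D}. -/

import Mathlib

open MeasureTheory Set Filter Topology

/-- Average of `w` over the interval `[a, b)`. -/
noncomputable def avgOn (w : ℝ → ℝ) (a b : ℝ) : ℝ :=
  (b - a)⁻¹ * ∫ x in Set.Ico a b, w x

/-- A weight on `ℝ`: measurable, locally integrable, a.e. positive. -/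
def IsWeight (w : ℝ → ℝ) : Prop :=
  Measurable w ∧ MeasureTheory.LocallyIntegrable w ∧ ∀ᵐ x ∂(volume : Measure ℝ), 0 < w x

/-- Average of `w` over the dyadic interval `[k 2^n, (k+1) 2^n)`. -/
noncomputable def dyadAvg (w : ℝ → ℝ) (n k : ℤ) : ℝ :=
  avgOn w ((k : ℝ) * (2 : ℝ) ^ n) (((k : ℝ) + 1) * (2 : ℝ) ^ n)

/-- The strong dyadic smoothness constant of `w` is at most `S`. -/
def StrongDyadSmoothLE (w : ℝ → ℝ) (S : ℝ) : Prop :=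
  ∀ n k : ℤ, dyadAvg w n k ≤ S * dyadAvg w n (k + 1) ∧
    dyadAvg w n (k + 1) ≤ S * dyadAvg w n k

/-- The set of values `⟨w⟩_I ⟨σ⟩_I^{p-1}` over all dyadic intervals `I`;
its supremum is the joint dyadic Muckenhoupt characteristic `[w,σ]_{A_p,D}`. -/
noncomputable def dyadApSet (p : ℝ) (w σ : ℝ → ℝ) : Set ℝ :=
  {c | ∃ n k : ℤ, c = dyadAvg w n k * (dyadAvg σ n k) ^ (p - 1)}

/-! Auxiliary lemmas -/

lemma weight_integrableOn {w : ℝ → ℝ} (hw : IsWeight w) (a b : ℝ) :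
    IntegrableOn w (Set.Ico a b) := by
  exact (hw.2.1.integrableOn_isCompact isCompact_Icc).mono_set Set.Ico_subset_Icc_self

lemma weight_setIntegral_nonneg {w : ℝ → ℝ} (hw : IsWeight w) (s : Set ℝ) :
    0 ≤ ∫ x in s, w x := by
  refine integral_nonneg_of_ae ?_
  exact ae_restrict_of_ae (hw.2.2.mono fun x hx => le_of_lt hx)

lemma avgOn_nonneg {w : ℝ → ℝ} (hw : IsWeight w) {a b : ℝ} (hab : a ≤ b) :
    0 ≤ avgOn w a b := by
  unfold avgOn
  have h1 : (0:ℝ) ≤ (b - a)⁻¹ := inv_nonneg.2 (by linarith)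
  exact mul_nonneg h1 (weight_setIntegral_nonneg hw _)

lemma dyadAvg_nonneg {w : ℝ → ℝ} (hw : IsWeight w) (n k : ℤ) :
    0 ≤ dyadAvg w n k := by
  apply avgOn_nonneg hw
  have : (0:ℝ) < (2:ℝ) ^ n := zpow_pos (by norm_num) n
  nlinarith

lemma dyadAvg_integral (w : ℝ → ℝ) (n k : ℤ) :
    ∫ x in Set.Ico ((k:ℝ) * (2:ℝ) ^ n) (((k:ℝ) + 1) * (2:ℝ) ^ n), w x
      = (2:ℝ) ^ n * dyadAvg w n k := by
  have h2 : (0:ℝ) < (2:ℝ) ^ n := zpow_pos (by norm_num) n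
  have h : ((k:ℝ) + 1) * (2:ℝ) ^ n - (k:ℝ) * (2:ℝ) ^ n = (2:ℝ) ^ n := by ring
  rw [dyadAvg, avgOn, h, ← mul_assoc, mul_inv_cancel₀ (ne_of_gt h2), one_mul]

lemma dyadAvg_chain {w : ℝ → ℝ} (hw : IsWeight w) {S : ℝ} (hS : 1 ≤ S)
    (hsm : StrongDyadSmoothLE w S) (n k : ℤ) (i : ℕ) :
    dyadAvg w n (k + i) ≤ S ^ i * dyadAvg w n k := by
  induction i with
  | zero => simp
  | succ i ih =>
    have h2 := (hsm n (k + i)).2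
    have hS0 : (0:ℝ) ≤ S := le_trans zero_le_one hS
    have e : (k + (i + 1 : ℕ) : ℤ) = (k + i) + 1 := by push_cast; ring
    calc dyadAvg w n (k + (i + 1 : ℕ)) = dyadAvg w n ((k + i) + 1) := by rw [e]
      _ ≤ S * dyadAvg w n (k + i) := h2
      _ ≤ S * (S ^ i * dyadAvg w n k) := mul_le_mul_of_nonneg_left ih hS0
      _ = S ^ (i + 1) * dyadAvg w n k := by ring

lemma main_int {w : ℝ → ℝ} (hw : IsWeight w) {S : ℝ} (hS : 1 ≤ S)
    (hsm : StrongDyadSmoothLE w S) (n k : ℤ) : ∀ m : ℕ,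
    ∫ x in Set.Ico ((k:ℝ) * (2:ℝ) ^ n) (((k:ℝ) + (m + 1)) * (2:ℝ) ^ n), w x
      ≤ (m + 1) * (2:ℝ) ^ n * (S ^ m * dyadAvg w n k) := by
  have h2 : (0:ℝ) < (2:ℝ) ^ n := zpow_pos (by norm_num) n
  have hS0 : (0:ℝ) ≤ S := le_trans zero_le_one hS
  intro m
  induction m with
  | zero =>
    simp only [Nat.cast_zero, zero_add, pow_zero, one_mul]
    rw [dyadAvg_integral]
  | succ m ih =>
    set A := (k:ℝ) * (2:ℝ) ^ n with hA
    set B := ((k:ℝ) + (m + 1)) * (2:ℝ) ^ n with hB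
    set C := ((k:ℝ) + ((m:ℝ) + 1 + 1)) * (2:ℝ) ^ n with hC
    have hAB : A ≤ B := by
      rw [hA, hB]
      have hm0 : (0:ℝ) ≤ (m:ℝ) := Nat.cast_nonneg m
      nlinarith
    have hBC : B ≤ C := by
      rw [hB, hC]; nlinarith
    have hsplit : Set.Ico A C = Set.Ico A B ∪ Set.Ico B C :=
      (Set.Ico_union_Ico_eq_Ico hAB hBC).symm
    have hint : ∫ x in Set.Ico A C, w x
        = (∫ x in Set.Ico A B, w x) + ∫ x in Set.Ico B C, w x := by
      rw [hsplit]
      exact setIntegral_union (Set.Ico_disjoint_Ico_same)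
        measurableSet_Ico (weight_integrableOn hw A B) (weight_integrableOn hw B C)
    have hd : dyadAvg w n (k + (m + 1 : ℕ)) ≤ S ^ (m + 1) * dyadAvg w n k :=
      dyadAvg_chain hw hS hsm n k (m + 1)
    have hBC_int : ∫ x in Set.Ico B C, w x ≤ (2:ℝ) ^ n * (S ^ (m+1) * dyadAvg w n k) := by
      have e1 : B = ((k + (m + 1 : ℕ) : ℤ) : ℝ) * (2:ℝ) ^ n := by push_cast; ring
      have e2 : C = (((k + (m + 1 : ℕ) : ℤ) : ℝ) + 1) * (2:ℝ) ^ n := by push_cast; ring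
      rw [e1, e2, dyadAvg_integral]
      exact mul_le_mul_of_nonneg_left hd (le_of_lt h2)
    have hpow : S ^ m * dyadAvg w n k ≤ S ^ (m + 1) * dyadAvg w n k := by
      apply mul_le_mul_of_nonneg_right _ (dyadAvg_nonneg hw n k)
      exact pow_le_pow_right₀ hS (Nat.le_succ m)
    have key : (↑(m+1) + 1 : ℝ) = (m:ℝ) + 1 + 1 := by push_cast; ring
    calc ∫ x in Set.Ico ((k:ℝ) * (2:ℝ) ^ n) (((k:ℝ) + (↑(m+1) + 1)) * (2:ℝ) ^ n), w x
        = ∫ x in Set.Ico A C, w x := by rw [hA, hC, key]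
      _ = (∫ x in Set.Ico A B, w x) + ∫ x in Set.Ico B C, w x := hint
      _ ≤ (m + 1) * (2:ℝ) ^ n * (S ^ m * dyadAvg w n k)
            + (2:ℝ) ^ n * (S ^ (m+1) * dyadAvg w n k) := add_le_add ih hBC_int
      _ ≤ (m + 1) * (2:ℝ) ^ n * (S ^ (m+1) * dyadAvg w n k)
            + (2:ℝ) ^ n * (S ^ (m+1) * dyadAvg w n k) := by
            refine add_le_add_left (mul_le_mul_of_nonneg_left hpow (by positivity)) _
      _ = (↑(m+1) + 1) * (2:ℝ) ^ n * (S ^ (m+1) * dyadAvg w n k) := by push_cast; ring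

/-- Key bound: the average over an arbitrary interval is controlled by a dyadic average
at a comparable scale. -/
lemma avg_bound {w : ℝ → ℝ} (hw : IsWeight w) {S : ℝ} (hS : 1 ≤ S)
    (hsm : StrongDyadSmoothLE w S) (N : ℕ) (hN : 0 < N) {a b : ℝ} (hab : a < b)
    (n : ℤ) (hs1 : (2:ℝ) ^ n ≤ (b - a) / N) (hs2 : (b - a) / N < 2 * (2:ℝ) ^ n) :
    avgOn w a b ≤ (1 + 2 / N) * S ^ (2 * N) * dyadAvg w n ⌊a / (2:ℝ) ^ n⌋ := by
  have h2 : (0:ℝ) < (2:ℝ) ^ n := zpow_pos (by norm_num) n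
  have hNR : (0:ℝ) < (N:ℝ) := by exact_mod_cast hN
  have hba : 0 < b - a := by linarith
  set s : ℝ := (2:ℝ) ^ n with hs
  set k0 : ℤ := ⌊a / s⌋ with hk0
  set K : ℤ := ⌈b / s⌉ with hK
  have hk0a : (k0:ℝ) * s ≤ a := by
    have := Int.floor_le (a / s)
    calc (k0:ℝ) * s ≤ (a / s) * s := by nlinarith
      _ = a := by field_simp
  have hbK : b ≤ (K:ℝ) * s := by
    have := Int.le_ceil (b / s)
    calc b = (b / s) * s := by field_simp
      _ ≤ (K:ℝ) * s := by nlinarith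
  have hKk0 : k0 < K := by
    have h1 : (k0:ℝ) * s < (K:ℝ) * s := by linarith
    exact_mod_cast lt_of_mul_lt_mul_right h1 (le_of_lt h2)
  -- m + 1 = K - k0
  set m : ℕ := (K - k0 - 1).toNat with hm
  have hm1 : (m:ℤ) = K - k0 - 1 := Int.toNat_of_nonneg (by omega)
  have hKm : K = k0 + (m + 1 : ℕ) := by push_cast; omega
  -- count bounds
  have hKR : (K:ℝ) = (k0:ℝ) + ((m:ℝ) + 1) := by
    rw [hKm]; push_cast; ring
  have hf : a / s - 1 < (k0:ℝ) := Int.sub_one_lt_floor (a / s)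
  have hc : (K:ℝ) < b / s + 1 := Int.ceil_lt_add_one (b / s)
  have hds : b / s - a / s = (b - a) / s := by ring
  have hKr : ((m:ℝ) + 1) = (K:ℝ) - (k0:ℝ) := by rw [hKR]; ring
  have h3 : ((m:ℝ) + 1) < (b - a) / s + 2 := by
    rw [hKr]; nlinarith
  have hcount : ((m:ℝ) + 1) * s ≤ (b - a) + 2 * s := by
    have h4 : ((m:ℝ) + 1) * s ≤ ((b - a) / s + 2) * s := by nlinarith
    have h5 : ((b - a) / s + 2) * s = (b - a) + 2 * s := by field_simp
    linarith
  have hchain : m ≤ 2 * N := by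
    have h1 : (b - a) / s < 2 * (N:ℝ) := by
      rw [div_lt_iff₀ h2]
      have h6 := (div_lt_iff₀ hNR).mp hs2
      nlinarith
    have h4 : (m:ℝ) < 2 * (N:ℝ) + 1 := by linarith
    have : (m:ℤ) < 2 * (N:ℤ) + 1 := by exact_mod_cast h4
    omega
  -- integral bound
  have hsub : Set.Ico a b ⊆ Set.Ico ((k0:ℝ) * s) (((k0:ℝ) + (m + 1)) * s) := by
    have e : ((k0:ℝ) + (m + 1)) * s = (K:ℝ) * s := by rw [hKR]
    rw [e]
    exact Set.Ico_subset_Ico hk0a hbK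
  have hmono : ∫ x in Set.Ico a b, w x
      ≤ ∫ x in Set.Ico ((k0:ℝ) * s) (((k0:ℝ) + (m + 1)) * s), w x := by
    apply setIntegral_mono_set (weight_integrableOn hw _ _)
      (ae_restrict_of_ae (hw.2.2.mono fun x hx => le_of_lt hx))
    exact Filter.Eventually.of_forall hsub
  have hmain := main_int hw hS hsm n k0 m
  have hd0 : 0 ≤ dyadAvg w n k0 := dyadAvg_nonneg hw n k0
  have hSm : S ^ m ≤ S ^ (2 * N) := pow_le_pow_right₀ hS hchain
  have hint : ∫ x in Set.Ico a b, w x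
      ≤ ((b - a) + 2 * s) * (S ^ (2 * N) * dyadAvg w n k0) := by
    calc ∫ x in Set.Ico a b, w x
        ≤ ((m:ℝ) + 1) * s * (S ^ m * dyadAvg w n k0) := le_trans hmono hmain
      _ ≤ ((m:ℝ) + 1) * s * (S ^ (2 * N) * dyadAvg w n k0) := by
          apply mul_le_mul_of_nonneg_left _ (by positivity)
          exact mul_le_mul_of_nonneg_right hSm hd0
      _ ≤ ((b - a) + 2 * s) * (S ^ (2 * N) * dyadAvg w n k0) := by
          apply mul_le_mul_of_nonneg_right hcount
          have : (0:ℝ) ≤ S ^ (2 * N) := by positivity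
          exact mul_nonneg this hd0
  have hss : (b - a) + 2 * s ≤ (b - a) * (1 + 2 / N) := by
    have : s ≤ (b - a) / N := hs1
    rw [mul_add, mul_one]
    have : 2 * s ≤ 2 * ((b - a) / N) := by linarith
    calc (b - a) + 2 * s ≤ (b - a) + 2 * ((b - a) / N) := by linarith
      _ = (b - a) * (2 / N) + (b - a) := by field_simp; ring
      _ = (b - a) + (b - a) * (2 / N) := by ring
  rw [avgOn]
  have hinv : (0:ℝ) < (b - a)⁻¹ := inv_pos.2 hba
  calc (b - a)⁻¹ * ∫ x in Set.Ico a b, w x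
      ≤ (b - a)⁻¹ * (((b - a) * (1 + 2 / N)) * (S ^ (2 * N) * dyadAvg w n k0)) := by
        apply mul_le_mul_of_nonneg_left _ (le_of_lt hinv)
        refine le_trans hint (mul_le_mul_of_nonneg_right hss ?_)
        exact mul_nonneg (by positivity) hd0
    _ = (1 + 2 / N) * S ^ (2 * N) * dyadAvg w n k0 := by
        field_simp

theorem statement6 (p : ℝ) (hp : 1 < p) :
    ∃ δ : ℝ, 0 < δ ∧
      ∀ w σ : ℝ → ℝ, IsWeight w → IsWeight σ →
        BddAbove (dyadApSet p w σ) →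
        StrongDyadSmoothLE w (1 + δ) → StrongDyadSmoothLE σ (1 + δ) →
        ∀ a b : ℝ, a < b →
          avgOn w a b * (avgOn σ a b) ^ (p - 1) ≤ (5 / 4) * sSup (dyadApSet p w σ) := by
  have hp0 : (0:ℝ) < p := lt_trans one_pos hp
  set r : ℝ := (5/4 : ℝ) ^ ((1:ℝ)/(2*p)) with hr_def
  have hr1 : 1 < r := by
    rw [hr_def, Real.one_lt_rpow_iff_of_pos (by norm_num)]
    left
    exact ⟨by norm_num, div_pos one_pos (by linarith)⟩
  have hr0 : (0:ℝ) < r := lt_trans one_pos hr1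
  set N : ℕ := ⌈2/(r-1)⌉₊ + 1 with hN_def
  have hN0 : 0 < N := Nat.succ_pos _
  have hNR : (0:ℝ) < (N:ℝ) := by exact_mod_cast hN0
  have hN : 1 + 2/(N:ℝ) ≤ r := by
    have h1 : 2/(r-1) ≤ (N:ℝ) := by
      have := Nat.le_ceil (2/(r-1))
      have hcast : ((⌈2/(r-1)⌉₊ : ℕ) : ℝ) + 1 = (N:ℝ) := by
        rw [hN_def]; push_cast; ring
      linarith
    have hr1' : (0:ℝ) < r - 1 := by linarith
    rw [div_le_iff₀ hr1'] at h1
    have : 2/(N:ℝ) ≤ r - 1 := by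
      rw [div_le_iff₀ hNR]
      nlinarith
    linarith
  set δ : ℝ := r ^ ((1:ℝ)/(2*N)) - 1 with hδ_def
  have hδ : 0 < δ := by
    rw [hδ_def, sub_pos]
    rw [Real.one_lt_rpow_iff_of_pos hr0]
    left
    exact ⟨hr1, by positivity⟩
  refine ⟨δ, hδ, ?_⟩
  intro w σ hw hσ hbdd hsw hsσ a b hab
  set S : ℝ := 1 + δ with hS_def
  have hS1 : 1 ≤ S := by rw [hS_def]; linarith
  have hSr : S = r ^ ((1:ℝ)/(2*N)) := by rw [hS_def, hδ_def]; ring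
  have hSpow : S ^ (2 * N) = r := by
    rw [hSr, ← Real.rpow_natCast (r ^ ((1:ℝ)/(2*N))) (2*N), ← Real.rpow_mul (le_of_lt hr0)]
    have : (1:ℝ)/(2*N) * ((2*N : ℕ):ℝ) = 1 := by
      push_cast
      field_simp
    rw [this, Real.rpow_one]
  -- choose the scale
  have hba : (0:ℝ) < b - a := by linarith
  have hq : (0:ℝ) < (b - a) / N := by positivity
  set n : ℤ := Int.log 2 ((b - a) / N) with hn_def
  have hs1 : (2:ℝ) ^ n ≤ (b - a) / N := by
    have h := Int.zpow_log_le_self (b := 2) (R := ℝ) (by norm_num) hq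
    rw [hn_def]
    exact_mod_cast h
  have hs2 : (b - a) / N < 2 * (2:ℝ) ^ n := by
    have h := Int.lt_zpow_succ_log_self (b := 2) (R := ℝ) (by norm_num) ((b - a) / N)
    have h2 : ((2:ℕ):ℝ) ^ (Int.log 2 ((b - a) / (N:ℝ)) + 1)
        = 2 * (2:ℝ) ^ (Int.log 2 ((b - a) / (N:ℝ))) := by
      push_cast
      rw [zpow_add₀ (by norm_num : (2:ℝ) ≠ 0), zpow_one]
      ring
    rw [h2] at h
    rw [hn_def]
    exact h
  set k0 : ℤ := ⌊a / (2:ℝ) ^ n⌋ with hk0_def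
  have hbw := avg_bound hw hS1 hsw N hN0 hab n hs1 hs2
  have hbσ := avg_bound hσ hS1 hsσ N hN0 hab n hs1 hs2
  set E : ℝ := (1 + 2/(N:ℝ)) * S ^ (2 * N) with hE_def
  have hE1 : 1 ≤ E := by
    rw [hE_def]
    have h1 : (1:ℝ) ≤ 1 + 2/(N:ℝ) := by
      have : (0:ℝ) ≤ 2/(N:ℝ) := by positivity
      linarith
    have h2 : (1:ℝ) ≤ S ^ (2*N) := one_le_pow₀ hS1
    nlinarith
  have hE0 : (0:ℝ) < E := lt_of_lt_of_le one_pos hE1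
  have hEr : E ≤ (5/4 : ℝ) ^ ((1:ℝ)/p) := by
    rw [hE_def, hSpow]
    have : (1 + 2/(N:ℝ)) * r ≤ r * r := by nlinarith
    have hrr : r * r = (5/4 : ℝ) ^ ((1:ℝ)/p) := by
      rw [hr_def, ← Real.rpow_add (by norm_num : (0:ℝ) < 5/4)]
      congr 1
      field_simp
      ring
    linarith [hrr ▸ this]
  set dw : ℝ := dyadAvg w n k0 with hdw
  set dσ : ℝ := dyadAvg σ n k0 with hdσ
  have hdw0 : 0 ≤ dw := dyadAvg_nonneg hw n k0
  have hdσ0 : 0 ≤ dσ := dyadAvg_nonneg hσ n k0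
  have hp1 : (0:ℝ) ≤ p - 1 := by linarith
  have havgσ0 : 0 ≤ avgOn σ a b := avgOn_nonneg hσ (le_of_lt hab)
  -- the element of the dyadic set
  have hmem : dw * dσ ^ (p - 1) ∈ dyadApSet p w σ := ⟨n, k0, rfl⟩
  have hle_sup : dw * dσ ^ (p - 1) ≤ sSup (dyadApSet p w σ) := le_csSup hbdd hmem
  have helem0 : 0 ≤ dw * dσ ^ (p - 1) := mul_nonneg hdw0 (Real.rpow_nonneg hdσ0 _)
  have hsup0 : 0 ≤ sSup (dyadApSet p w σ) := le_trans helem0 hle_sup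
  -- put it together
  have h1 : avgOn w a b ≤ E * dw := hbw
  have h2 : (avgOn σ a b) ^ (p - 1) ≤ E ^ (p - 1) * dσ ^ (p - 1) := by
    calc (avgOn σ a b) ^ (p - 1) ≤ (E * dσ) ^ (p - 1) :=
          Real.rpow_le_rpow havgσ0 hbσ hp1
      _ = E ^ (p - 1) * dσ ^ (p - 1) := Real.mul_rpow (le_of_lt hE0) hdσ0
  have h3 : avgOn w a b * (avgOn σ a b) ^ (p - 1)
      ≤ (E * dw) * (E ^ (p - 1) * dσ ^ (p - 1)) := by
    apply mul_le_mul h1 h2 (Real.rpow_nonneg havgσ0 _) (mul_nonneg (le_of_lt hE0) hdw0)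
  have hEp : E * E ^ (p - 1) = E ^ p := by
    nth_rewrite 1 [← Real.rpow_one E]
    rw [← Real.rpow_add hE0]
    congr 1
    ring
  have h4 : (E * dw) * (E ^ (p - 1) * dσ ^ (p - 1))
      = E ^ p * (dw * dσ ^ (p - 1)) := by
    rw [← hEp]; ring
  have hEp54 : E ^ p ≤ (5/4 : ℝ) := by
    calc E ^ p ≤ ((5/4 : ℝ) ^ ((1:ℝ)/p)) ^ p :=
          Real.rpow_le_rpow (le_of_lt hE0) hEr (le_of_lt hp0)
      _ = (5/4 : ℝ) := by
          rw [← Real.rpow_mul (by norm_num : (0:ℝ) ≤ 5/4), one_div,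
            inv_mul_cancel₀ (ne_of_gt hp0), Real.rpow_one]
  calc avgOn w a b * (avgOn σ a b) ^ (p - 1)
      ≤ E ^ p * (dw * dσ ^ (p - 1)) := by rw [← h4]; exact h3
    _ ≤ E ^ p * sSup (dyadApSet p w σ) :=
        mul_le_mul_of_nonneg_left hle_sup (Real.rpow_nonneg (le_of_lt hE0) _)
    _ ≤ (5/4 : ℝ) * sSup (dyadApSet p w σ) :=
        mul_le_mul_of_nonneg_right hEp54 hsup0
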